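/- Let m be an integer, ω_L > 0, σ ∈ {+1, −1}, and set Z = σ·√(2(2|m|+1)·ω_L), E = (m + |m| + 2)·ω_L, and u(r) = r^{|m|+1/2}·e^{−ω_L r²/2}·(r + σ·√((2|m|+1)/(2ω_L))). Then for every r > 0, −u″(r) + ((m² − 1/4)/r² + ω_L² r² + Z/r)·u(r) = 2(E − m·ω_L)·u(r). -/

import Mathlib

lemma expDeriv (ω : ℝ) (s : ℝ) :
    HasDerivAt (fun x : ℝ => Real.exp (-ω * x ^ 2 / 2))
      (-(ω * s) * Real.exp (-ω * s ^ 2 / 2)) s := by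
  have h : HasDerivAt (fun x : ℝ => -ω * x ^ 2 / 2) (-(ω * s)) s := by
    have := ((hasDerivAt_pow 2 s).const_mul (-ω)).div_const 2
    exact this.congr_deriv (by ring)
  have := h.exp
  convert this using 1; ring

lemma gDeriv (ω p : ℝ) {s : ℝ} (hs : 0 < s) :
    HasDerivAt (fun x : ℝ => x ^ p * Real.exp (-ω * x ^ 2 / 2))
      ((p * s ^ (p - 1) - ω * s * s ^ p) * Real.exp (-ω * s ^ 2 / 2)) s := by
  have h1 : HasDerivAt (fun x : ℝ => x ^ p) (p * s ^ (p - 1)) s :=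
    Real.hasDerivAt_rpow_const (Or.inl hs.ne')
  have := h1.mul (expDeriv ω s)
  exact this.congr_deriv (by ring)

lemma qDeriv (ω p : ℝ) {s : ℝ} (hs : 0 < s) :
    HasDerivAt (fun x : ℝ => p * x ^ (p - 1) - ω * x * x ^ p)
      (p * ((p - 1) * s ^ (p - 1 - 1)) - (ω * s ^ p + ω * s * (p * s ^ (p - 1)))) s := by
  have h1 : HasDerivAt (fun x : ℝ => x ^ (p - 1)) ((p - 1) * s ^ (p - 1 - 1)) s :=
    Real.hasDerivAt_rpow_const (Or.inl hs.ne')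
  have h2 : HasDerivAt (fun x : ℝ => x ^ p) (p * s ^ (p - 1)) s :=
    Real.hasDerivAt_rpow_const (Or.inl hs.ne')
  have h3 := ((hasDerivAt_id s).mul h2).const_mul ω
  have := (h1.const_mul p).sub h3
  simp only [id_eq] at this
  rw [show p * ((p - 1) * s ^ (p - 1 - 1)) - (ω * s ^ p + ω * s * (p * s ^ (p - 1)))
      = p * ((p - 1) * s ^ (p - 1 - 1)) - ω * (1 * s ^ p + s * (p * s ^ (p - 1))) by ring]
  have hf : (fun x : ℝ => p * x ^ (p - 1) - ω * x * x ^ p)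
      = (fun y : ℝ => p * y ^ (p - 1)) - fun y : ℝ => ω * ((id : ℝ → ℝ) * fun x : ℝ => x ^ p) y := by
    funext x; simp only [Pi.sub_apply, Pi.mul_apply, id_eq]; ring
  rw [hf]
  exact this

/-- Exact n = 1 solutions of the radial Schrödinger equation of the 2D
hydrogen atom in a uniform magnetic field, with energy `E = (m+|m|+2)ω_L`
and constraint `Z = ±√(2(2|m|+1)ω_L)`. -/
theorem hydrogen2D_n1_radial (m : ℤ) (ωL : ℝ) (hω : 0 < ωL) (σ : ℝ)
    (hσ : σ = 1 ∨ σ = -1) (Z E : ℝ)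
    (hZ : Z = σ * Real.sqrt (2 * (2 * |(m : ℝ)| + 1) * ωL))
    (hE : E = ((m : ℝ) + |(m : ℝ)| + 2) * ωL)
    (u : ℝ → ℝ)
    (hu : u = fun r : ℝ =>
      r ^ (|(m : ℝ)| + 1 / 2) * Real.exp (-ωL * r ^ 2 / 2) *
        (r + σ * Real.sqrt ((2 * |(m : ℝ)| + 1) / (2 * ωL))))
    (r : ℝ) (hr : 0 < r) :
    -deriv (deriv u) r
      + (((m : ℝ) ^ 2 - 1 / 4) / r ^ 2 + ωL ^ 2 * r ^ 2 + Z / r) * u r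
    = 2 * (E - (m : ℝ) * ωL) * u r := by
  subst hu hZ hE
  set a : ℝ := |(m : ℝ)| with ha
  set p : ℝ := a + 1 / 2 with hp
  set c : ℝ := σ * Real.sqrt ((2 * a + 1) / (2 * ωL)) with hc
  set Z : ℝ := σ * Real.sqrt (2 * (2 * a + 1) * ωL) with hZ
  have ha0 : (0:ℝ) ≤ a := abs_nonneg _
  have hσ2 : σ ^ 2 = 1 := by rcases hσ with h | h <;> rw [h] <;> norm_num
  -- key scalar identities
  have hsq : 2 * ωL * Real.sqrt ((2 * a + 1) / (2 * ωL)) = Real.sqrt (2 * (2 * a + 1) * ωL) := by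
    rw [show 2 * (2 * a + 1) * ωL = (2 * ωL) ^ 2 * ((2 * a + 1) / (2 * ωL)) by
      field_simp]
    rw [Real.sqrt_mul (by positivity), Real.sqrt_sq (by positivity)]
  have hZ2 : Z = 2 * ωL * c := by rw [hZ, hc, ← hsq]; ring
  have hZc : Z * c = 2 * a + 1 := by
    rw [hZ, hc]
    have h1 : Real.sqrt (2 * (2 * a + 1) * ωL) * Real.sqrt ((2 * a + 1) / (2 * ωL))
        = 2 * a + 1 := by
      rw [← Real.sqrt_mul (by positivity),
        show 2 * (2 * a + 1) * ωL * ((2 * a + 1) / (2 * ωL)) = (2 * a + 1) ^ 2 by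
          field_simp,
        Real.sqrt_sq (by positivity)]
    calc σ * Real.sqrt (2 * (2 * a + 1) * ωL) * (σ * Real.sqrt ((2 * a + 1) / (2 * ωL)))
        = σ ^ 2 * (Real.sqrt (2 * (2 * a + 1) * ωL) * Real.sqrt ((2 * a + 1) / (2 * ωL))) := by
          ring
      _ = 2 * a + 1 := by rw [hσ2, h1]; ring
  have hm2 : (m : ℝ) ^ 2 = a ^ 2 := (sq_abs _).symm
  -- derivative of u on (0, ∞)
  set u : ℝ → ℝ := fun x => x ^ p * Real.exp (-ωL * x ^ 2 / 2) * (x + c) with hu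
  set D : ℝ → ℝ := fun x =>
    (p * x ^ (p - 1) - ωL * x * x ^ p) * Real.exp (-ωL * x ^ 2 / 2) * (x + c)
      + x ^ p * Real.exp (-ωL * x ^ 2 / 2) with hD
  have hud : ∀ s ∈ Set.Ioi (0:ℝ), HasDerivAt u (D s) s := by
    intro s hs
    have := (gDeriv ωL p hs).mul ((hasDerivAt_id s).add_const c)
    simp only [id_eq] at this
    exact this.congr_deriv (by simp only [hD]; ring)
  have hev : deriv u =ᶠ[nhds r] D := by
    filter_upwards [isOpen_Ioi.mem_nhds (Set.mem_Ioi.2 hr)] with s hs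
    exact (hud s hs).deriv
  have hDD := (((qDeriv ωL p hr).mul (expDeriv ωL r)).mul
      ((hasDerivAt_id r).add_const c)).add (gDeriv ωL p hr)
  simp only [id_eq, Pi.mul_apply] at hDD
  have hder2 : deriv (deriv u) r = _ := hev.deriv_eq.trans hDD.deriv
  rw [hder2]
  have hrne : r ≠ 0 := hr.ne'
  have e1 : r ^ (p - 1) = r ^ (p - 2) * r := by
    rw [show p - 1 = p - 2 + 1 by ring, Real.rpow_add hr, Real.rpow_one]
  have e2 : r ^ p = r ^ (p - 2) * r ^ 2 := by
    rw [← Real.rpow_natCast r 2, ← Real.rpow_add hr]; norm_num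
  simp only [hu]
  rw [show p - 1 - 1 = p - 2 by ring, e1, e2, hm2, hZ2]
  set Y : ℝ := r ^ (p - 2) with hY
  set Eexp : ℝ := Real.exp (-ωL * r ^ 2 / 2) with hEe
  have hcc : 2 * ωL * c ^ 2 = 2 * a + 1 := by
    have h := hZc; rw [hZ2] at h; nlinarith [h]
  rw [hp]
  clear_value a c Y Eexp
  field_simp
  ring_nf
  linear_combination (16 * Y * Eexp * r) * hcc
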